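/- Let α : R → S be the ring isomorphism determined by α(u_j) = y_j + 1 for 1 ≤ j ≤ n. Then for every k ≥ 0, α(R^k) = S^k, and α(𝓘_λ ∩ R^k) + S^{k−1} = (I_λ ∩ S^k) + S^{k−1} as additive subgroups of S. -/

import Mathlib

open MvPolynomial Finset

/-- The `k`-th elementary symmetric polynomial in the variables indexed by `T ⊆ {1,…,n}`. -/
noncomputable def esymmOn (n : ℕ) (T : Finset (Fin n)) (k : ℕ) : MvPolynomial (Fin n) ℤ :=
  ∑ A ∈ T.powersetCard k, ∏ i ∈ A, X i

/-- The dual-partition value `η_j = #{i : λ_i ≥ j}` (here `lam` is 0-indexed). -/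
def eta (l : ℕ) (lam : ℕ → ℕ) (j : ℕ) : ℕ :=
  ((Finset.range l).filter fun i => j ≤ lam i).card

/-- `p_{λ^∨}(s) = η_{n-s+1} + ⋯ + η_n`. -/
def pdual (n l : ℕ) (lam : ℕ → ℕ) (s : ℕ) : ℕ :=
  ∑ j ∈ Finset.Icc (n - s + 1) n, eta l lam j

/-- The generator `h_d(u_i)` of the K-theoretic Tanisaki ideal, for index set `T` and `q`. -/
noncomputable def hpoly (n : ℕ) (T : Finset (Fin n)) (q d : ℕ) : MvPolynomial (Fin n) ℤ :=
  if q = 0 then esymmOn n T d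
  else ∑ k ∈ Finset.range (d + 1),
    MvPolynomial.C ((-1 : ℤ) ^ (d - k) * ((q + d - k - 1).choose (q - 1) : ℤ)) * esymmOn n T k

/-- The K-theoretic Tanisaki ideal `𝓘_λ`. -/
noncomputable def KTanisaki (n l : ℕ) (lam : ℕ → ℕ) : Ideal (MvPolynomial (Fin n) ℤ) :=
  Ideal.span {p | ∃ s : ℕ, 1 ≤ s ∧ s ≤ n ∧ ∃ T : Finset (Fin n), T.card = s ∧
    ∃ d : ℕ, s + 1 - pdual n l lam s ≤ d ∧ p = hpoly n T (pdual n l lam s) d}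

/-- The (cohomological) Tanisaki ideal `I_λ`. -/
noncomputable def Tanisaki (n l : ℕ) (lam : ℕ → ℕ) : Ideal (MvPolynomial (Fin n) ℤ) :=
  Ideal.span {p | ∃ s : ℕ, 1 ≤ s ∧ s ≤ n ∧ ∃ T : Finset (Fin n), T.card = s ∧
    ∃ d : ℕ, s + 1 - pdual n l lam s ≤ d ∧ p = esymmOn n T d}

/-- `R^k`: the additive group of polynomials of total degree ≤ k vanishing at (1,…,1). -/
noncomputable def RkGrp (n k : ℕ) : AddSubgroup (MvPolynomial (Fin n) ℤ) where
  carrier := {p | p.totalDegree ≤ k ∧ MvPolynomial.eval (fun _ => (1 : ℤ)) p = 0}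
  add_mem' := by
    intro a b ha hb
    exact ⟨le_trans (MvPolynomial.totalDegree_add a b) (max_le ha.1 hb.1), by simp [ha.2, hb.2]⟩
  zero_mem' := by simp
  neg_mem' := by
    intro a ha
    exact ⟨by rw [MvPolynomial.totalDegree_neg]; exact ha.1, by simp [ha.2]⟩

/-- `S^k`: the additive group of polynomials of total degree ≤ k with zero constant term. -/
noncomputable def SkLeGrp (n k : ℕ) : AddSubgroup (MvPolynomial (Fin n) ℤ) where
  carrier := {p | p.totalDegree ≤ k ∧ MvPolynomial.constantCoeff p = 0}
  add_mem' := by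
    intro a b ha hb
    exact ⟨le_trans (MvPolynomial.totalDegree_add a b) (max_le ha.1 hb.1), by simp [ha.2, hb.2]⟩
  zero_mem' := by simp
  neg_mem' := by
    intro a ha
    exact ⟨by rw [MvPolynomial.totalDegree_neg]; exact ha.1, by simp [ha.2]⟩


section Aux
open PowerSeries in
private noncomputable def FqPS (q : ℕ) : PowerSeries ℤ :=
  PowerSeries.mk (fun j => (-1)^j * ((q - 1 + j).choose (q-1) : ℤ))

open PowerSeries in
private lemma key1 (e : ℕ) : ((1 + PowerSeries.X)^(e+1) : PowerSeries ℤ) * FqPS (e+1) = 1 := by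
  have h0 : ((mk fun n => ((e + n).choose e : ℤ)) : PowerSeries ℤ) * ((1 - PowerSeries.X) ^ (e + 1)) = 1 :=
    mk_add_choose_mul_one_sub_pow_eq_one ℤ e
  have h := congrArg (rescale (-1 : ℤ)) h0
  rw [map_mul, map_pow, map_sub, map_one, rescale_neg_one_X, sub_neg_eq_add, rescale_mk] at h
  rw [mul_comm, FqPS]
  convert h using 4
  simp

open PowerSeries in
private lemma key1' (q : ℕ) (hq : 1 ≤ q) : ((1 + PowerSeries.X)^q : PowerSeries ℤ) * FqPS q = 1 := by
  obtain ⟨e, rfl⟩ := Nat.exists_eq_add_of_le hq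
  rw [Nat.add_comm 1 e]
  exact key1 e

open PowerSeries in
private lemma coeff_one_add_X_pow' (a t : ℕ) :
    PowerSeries.coeff t ((1 + PowerSeries.X)^a) = (a.choose t : ℤ) := by
  have h : ((1 + PowerSeries.X)^a : PowerSeries ℤ) = (((1 + Polynomial.X)^a : Polynomial ℤ) : PowerSeries ℤ) := by
    push_cast [Polynomial.coe_pow, Polynomial.coe_add, Polynomial.coe_one, Polynomial.coe_X]
    rfl
  rw [h, Polynomial.coeff_coe, Polynomial.coeff_one_add_X_pow]

open PowerSeries in
private lemma prodFqPS (a q : ℕ) (hq : 1 ≤ q) :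
    ((1 + PowerSeries.X)^a : PowerSeries ℤ) * FqPS q =
      (if q ≤ a then ((1+PowerSeries.X)^(a-q) : PowerSeries ℤ) else FqPS (q - a)) := by
  split_ifs with h
  · have h1 : ((1+PowerSeries.X)^a : PowerSeries ℤ) = (1+PowerSeries.X)^(a-q) * (1+PowerSeries.X)^q := by
      rw [← pow_add]; congr 1; omega
    rw [h1, mul_assoc, key1' q hq, mul_one]
  · have h2 : ((1+PowerSeries.X)^(q-a) : PowerSeries ℤ) * ((1+PowerSeries.X)^a * FqPS q) = 1 := by
      rw [← mul_assoc, ← pow_add]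
      have h3 : q - a + a = q := by omega
      rw [h3, key1' q hq]
    have h3 : ((1+PowerSeries.X)^(q-a) : PowerSeries ℤ) * FqPS (q-a) = 1 := key1' _ (by omega)
    have hu : IsUnit ((1+PowerSeries.X)^(q-a) : PowerSeries ℤ) := isUnit_iff_exists_inv.2 ⟨_, h3⟩
    exact hu.mul_left_cancel (h2.trans h3.symm)

private lemma lemB (a q t : ℕ) (hq : 1 ≤ q) :
    ∑ p ∈ Finset.HasAntidiagonal.antidiagonal t, ((a.choose p.1 : ℤ) * ((-1)^p.2 * ((q - 1 + p.2).choose (q-1) : ℤ)))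
      = if q ≤ a then ((a - q).choose t : ℤ) else (-1)^t * ((q - a - 1 + t).choose (q - a - 1) : ℤ) := by
  have h := congrArg (PowerSeries.coeff t) (prodFqPS a q hq)
  rw [PowerSeries.coeff_mul] at h
  simp only [coeff_one_add_X_pow', FqPS, PowerSeries.coeff_mk] at h
  rw [h]
  split_ifs with hcase
  · exact coeff_one_add_X_pow' _ _
  · simp [FqPS, PowerSeries.coeff_mk]

private lemma esymmOn_eq_zero {n : ℕ} (T : Finset (Fin n)) {k : ℕ} (h : T.card < k) :
    esymmOn n T k = 0 := by
  rw [esymmOn, Finset.powersetCard_eq_empty.2 h, Finset.sum_empty]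

private lemma card_filter_subset {n : ℕ} (T B : Finset (Fin n)) (hB : B ⊆ T) (k : ℕ) :
    ((T.powersetCard k).filter (fun A => B ⊆ A)).card
      = if B.card ≤ k then (T.card - B.card).choose (k - B.card) else 0 := by
  split_ifs with h
  · rw [← Finset.card_sdiff_of_subset hB, ← Finset.card_powersetCard (k - B.card) (T \ B)]
    apply Finset.card_bij' (fun A _ => A \ B) (fun Ab _ => Ab ∪ B)
    · intro A hA
      rw [Finset.mem_filter, Finset.mem_powersetCard] at hA
      rw [Finset.mem_powersetCard]
      exact ⟨Finset.sdiff_subset_sdiff hA.1.1 le_rfl,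
        by rw [Finset.card_sdiff_of_subset hA.2, hA.1.2]⟩
    · intro Ab hAb
      rw [Finset.mem_powersetCard] at hAb
      have hdisj : Disjoint Ab B := Finset.disjoint_of_subset_left hAb.1 Finset.sdiff_disjoint
      rw [Finset.mem_filter, Finset.mem_powersetCard]
      refine ⟨⟨Finset.union_subset (hAb.1.trans (Finset.sdiff_subset)) hB, ?_⟩,
        Finset.subset_union_right⟩
      rw [Finset.card_union_of_disjoint hdisj, hAb.2]
      omega
    · intro A hA
      rw [Finset.mem_filter] at hA
      exact Finset.sdiff_union_of_subset hA.2
    · intro Ab hAb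
      rw [Finset.mem_powersetCard] at hAb
      exact Finset.union_sdiff_cancel_right
        (Finset.disjoint_of_subset_left hAb.1 Finset.sdiff_disjoint)
  · rw [Finset.card_eq_zero, Finset.filter_eq_empty_iff]
    intro A hA hBA
    have h1 := Finset.card_le_card hBA
    rw [(Finset.mem_powersetCard.1 hA).2] at h1
    omega

private lemma factA {n : ℕ} (T : Finset (Fin n)) (k : ℕ) :
    MvPolynomial.aeval (fun j : Fin n => (X j + 1 : MvPolynomial (Fin n) ℤ)) (esymmOn n T k)
      = ∑ m ∈ Finset.range (k+1),
          MvPolynomial.C (((T.card - m).choose (k - m) : ℤ)) * esymmOn n T m := by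
  have step1 : MvPolynomial.aeval (fun j : Fin n => (X j + 1 : MvPolynomial (Fin n) ℤ))
      (esymmOn n T k) = ∑ A ∈ T.powersetCard k, ∏ i ∈ A, (X i + 1) := by
    rw [esymmOn, map_sum]
    refine Finset.sum_congr rfl fun A _ => ?_
    rw [map_prod]
    simp
  have step2 : ∀ A ∈ T.powersetCard k,
      (∏ i ∈ A, (X i + 1 : MvPolynomial (Fin n) ℤ))
        = ∑ B ∈ T.powerset, if B ⊆ A then (∏ i ∈ B, X i) else 0 := by
    intro A hA
    have hAT : A ⊆ T := (Finset.mem_powersetCard.1 hA).1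
    have hset : A.powerset = T.powerset.filter (fun B => B ⊆ A) := by
      ext B
      simp only [Finset.mem_powerset, Finset.mem_filter]
      exact ⟨fun h => ⟨h.trans hAT, h⟩, fun h => h.2⟩
    rw [Finset.prod_add]
    simp only [Finset.prod_const_one, mul_one]
    rw [hset, Finset.sum_filter]
  rw [step1, Finset.sum_congr rfl step2, Finset.sum_comm]
  have step3 : ∀ B ∈ T.powerset,
      (∑ A ∈ T.powersetCard k, if B ⊆ A then (∏ i ∈ B, X i : MvPolynomial (Fin n) ℤ) else 0)
        = (if B.card ≤ k then ((T.card - B.card).choose (k - B.card) : ℤ) else 0) •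
            (∏ i ∈ B, X i) := by
    intro B hB
    rw [← Finset.sum_filter, Finset.sum_const, card_filter_subset T B (Finset.mem_powerset.1 hB) k]
    split_ifs with h
    · exact (natCast_zsmul _ _).symm
    · simp
  rw [Finset.sum_congr rfl step3, Finset.sum_powerset]
  set g : ℕ → MvPolynomial (Fin n) ℤ := fun j =>
    if j ≤ k then MvPolynomial.C (((T.card - j).choose (k - j) : ℤ)) * esymmOn n T j else 0 with hg
  have step4 : ∀ j ∈ Finset.range (T.card + 1),
      (∑ B ∈ Finset.powersetCard j T,
        (if B.card ≤ k then ((T.card - B.card).choose (k - B.card) : ℤ) else 0) • ∏ i ∈ B, X i)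
        = g j := by
    intro j _
    have hc : ∀ B ∈ Finset.powersetCard j T, ((if B.card ≤ k then ((T.card - B.card).choose (k - B.card) : ℤ) else 0) • ∏ i ∈ B, (X i : MvPolynomial (Fin n) ℤ))
        = (if j ≤ k then ((T.card - j).choose (k - j) : ℤ) else 0) • ∏ i ∈ B, X i := by
      intro B hB
      rw [(Finset.mem_powersetCard.1 hB).2]
    rw [Finset.sum_congr rfl hc, ← Finset.smul_sum, hg]
    simp only
    split_ifs with h
    · rw [MvPolynomial.smul_eq_C_mul, esymmOn]
    · rw [zero_smul]
  rw [Finset.sum_congr rfl step4]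
  have hbig1 : ∑ j ∈ Finset.range (T.card + 1), g j = ∑ j ∈ Finset.range (T.card + k + 2), g j := by
    apply Finset.sum_subset (Finset.range_subset_range.2 (by omega))
    intro j _ hj
    rw [Finset.mem_range, not_lt] at hj
    rw [hg]
    simp only
    split_ifs with h
    · rw [esymmOn_eq_zero T (by omega), mul_zero]
    · rfl
  have hbig2 : ∑ j ∈ Finset.range (k + 1), g j = ∑ j ∈ Finset.range (T.card + k + 2), g j := by
    apply Finset.sum_subset (Finset.range_subset_range.2 (by omega))
    intro j _ hj
    rw [Finset.mem_range, not_lt] at hj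
    rw [hg]
    simp only
    rw [if_neg (by omega)]
  rw [hbig1, ← hbig2]
  refine Finset.sum_congr rfl fun j hj => ?_
  rw [Finset.mem_range] at hj
  rw [hg]
  simp only
  rw [if_pos (by omega)]

private lemma intCast_eq_CMv {n : ℕ} (z : ℤ) :
    ((z : ℤ) : MvPolynomial (Fin n) ℤ) = MvPolynomial.C z :=
  (eq_intCast (MvPolynomial.C : ℤ →+* MvPolynomial (Fin n) ℤ) z).symm

private lemma coefSum (s q m d : ℕ) (hq : 1 ≤ q) (hm : m ≤ d) :
    (∑ k ∈ Finset.Icc m d,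
      ((-1:ℤ)^(d-k) * (((q+d-k-1).choose (q-1)) : ℤ) * (((s-m).choose (k-m)) : ℤ)))
    = if q ≤ s - m then (((s - m - q).choose (d-m)) : ℤ)
      else (-1)^(d-m) * (((q - (s-m) - 1 + (d-m)).choose (q - (s-m) - 1)) : ℤ) := by
  rw [← lemB (s-m) q (d-m) hq]
  apply Finset.sum_bij' (i := fun (k : ℕ) (_ : k ∈ Finset.Icc m d) => ((k - m, d - k) : ℕ × ℕ))
    (j := fun (p : ℕ × ℕ) (_ : p ∈ Finset.HasAntidiagonal.antidiagonal (d-m)) => p.1 + m)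
  · intro k hk
    rw [Finset.mem_Icc] at hk
    rw [Finset.HasAntidiagonal.mem_antidiagonal]
    omega
  · intro p hp
    rw [Finset.HasAntidiagonal.mem_antidiagonal] at hp
    rw [Finset.mem_Icc]
    omega
  · intro k hk
    rw [Finset.mem_Icc] at hk
    omega
  · intro p hp
    rw [Finset.HasAntidiagonal.mem_antidiagonal] at hp
    ext <;> simp <;> omega
  · intro k hk
    rw [Finset.mem_Icc] at hk
    have h1 : q + d - k - 1 = q - 1 + (d - k) := by omega
    rw [h1]
    ring

private lemma formulaF {n : ℕ} (T : Finset (Fin n)) (q d : ℕ) (hq : 1 ≤ q)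
    (hd : T.card + 1 - q ≤ d) :
    MvPolynomial.aeval (fun j : Fin n => (X j + 1 : MvPolynomial (Fin n) ℤ)) (hpoly n T q d)
      = ∑ m ∈ Finset.Icc (T.card + 1 - q) d,
          MvPolynomial.C ((-1 : ℤ)^(d - m) * ((d + q - T.card - 1).choose (d - m) : ℤ))
            * esymmOn n T m := by
  set s := T.card with hs
  rw [hpoly, if_neg (by omega), map_sum]
  have e1 : ∀ k ∈ Finset.range (d+1),
      MvPolynomial.aeval (fun j : Fin n => (X j + 1 : MvPolynomial (Fin n) ℤ))
        (MvPolynomial.C ((-1 : ℤ) ^ (d - k) * ((q + d - k - 1).choose (q - 1) : ℤ)) * esymmOn n T k)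
      = ∑ m ∈ Finset.range (d+1), (if m ≤ k then
          MvPolynomial.C ((-1 : ℤ) ^ (d - k) * ((q + d - k - 1).choose (q - 1) : ℤ)
            * ((s - m).choose (k - m) : ℤ)) * esymmOn n T m else 0) := by
    intro k hk
    rw [Finset.mem_range] at hk
    rw [map_mul, aeval_C, factA, Finset.mul_sum]
    rw [← Finset.sum_subset (Finset.range_subset_range.2 (by omega : k + 1 ≤ d + 1))]
    · refine Finset.sum_congr rfl fun m hm => ?_
      rw [Finset.mem_range] at hm
      rw [if_pos (by omega), MvPolynomial.algebraMap_eq, ← mul_assoc, ← map_mul]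
    · intro m _ hm
      rw [Finset.mem_range, not_lt] at hm
      rw [if_neg (by omega)]
  rw [Finset.sum_congr rfl e1, Finset.sum_comm]
  have e2 : ∀ m ∈ Finset.range (d+1),
      (∑ k ∈ Finset.range (d+1), if m ≤ k then
          MvPolynomial.C ((-1 : ℤ) ^ (d - k) * ((q + d - k - 1).choose (q - 1) : ℤ)
            * ((s - m).choose (k - m) : ℤ)) * esymmOn n T m else 0)
      = if s + 1 - q ≤ m then
          MvPolynomial.C ((-1 : ℤ)^(d - m) * ((d + q - s - 1).choose (d - m) : ℤ)) * esymmOn n T m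
        else 0 := by
    intro m hm
    rw [Finset.mem_range] at hm
    rw [← Finset.sum_filter]
    have hset : (Finset.range (d+1)).filter (fun k => m ≤ k) = Finset.Icc m d := by
      ext k
      simp only [Finset.mem_filter, Finset.mem_range, Finset.mem_Icc]
      omega
    rw [hset, ← Finset.sum_mul, ← map_sum, coefSum s q m d hq (by omega)]
    by_cases hms : m ≤ s
    · by_cases hmD : s + 1 - q ≤ m
      · rw [if_pos hmD, if_neg (by omega)]
        congr 2
        have h2 : q - (s - m) - 1 + (d - m) = d + q - s - 1 := by omega
        have h3 : q - (s - m) - 1 = (d + q - s - 1) - (d - m) := by omega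
        rw [h2, h3, Nat.choose_symm (by omega : d - m ≤ d + q - s - 1)]
      · rw [if_neg hmD, if_pos (by omega), Nat.choose_eq_zero_of_lt (by omega), Nat.cast_zero,
          map_zero, zero_mul]
    · rw [esymmOn_eq_zero T (by omega), mul_zero, mul_zero]
      split_ifs <;> rfl
  rw [Finset.sum_congr rfl e2, ← Finset.sum_filter]
  apply Finset.sum_congr
  · ext m
    simp only [Finset.mem_filter, Finset.mem_range, Finset.mem_Icc]
    omega
  · intro m _
    rfl

private lemma totalDegree_aeval_le' {n : ℕ} (f : Fin n → MvPolynomial (Fin n) ℤ)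
    (hf : ∀ j, (f j).totalDegree ≤ 1) (p : MvPolynomial (Fin n) ℤ) :
    (MvPolynomial.aeval f p).totalDegree ≤ p.totalDegree := by
  conv_lhs => rw [p.as_sum]
  rw [map_sum]
  refine le_trans (MvPolynomial.totalDegree_finset_sum _ _) (Finset.sup_le fun v hv => ?_)
  refine le_trans ?_ (MvPolynomial.le_totalDegree hv)
  rw [MvPolynomial.aeval_monomial]
  refine le_trans (MvPolynomial.totalDegree_mul _ _) ?_
  have h1 : (algebraMap ℤ (MvPolynomial (Fin n) ℤ) (MvPolynomial.coeff v p)).totalDegree = 0 := by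
    rw [MvPolynomial.algebraMap_eq, MvPolynomial.totalDegree_C]
  rw [h1, zero_add, Finsupp.prod]
  refine le_trans (MvPolynomial.totalDegree_finset_prod _ _) ?_
  rw [Finsupp.sum]
  refine Finset.sum_le_sum fun j _ => ?_
  refine le_trans (MvPolynomial.totalDegree_pow _ _) ?_
  calc v j * (f j).totalDegree ≤ v j * 1 := Nat.mul_le_mul_left _ (hf j)
    _ = v j := Nat.mul_one _

private lemma KT_mapsto {n l : ℕ} (lam : ℕ → ℕ) :
    ∀ p ∈ KTanisaki n l lam,
      MvPolynomial.aeval (fun j : Fin n => (X j + 1 : MvPolynomial (Fin n) ℤ)) p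
        ∈ Tanisaki n l lam := by
  intro p hp
  have hle : KTanisaki n l lam ≤ Ideal.comap
      (MvPolynomial.aeval (fun j : Fin n => (X j + 1 : MvPolynomial (Fin n) ℤ))).toRingHom
      (Tanisaki n l lam) := by
    rw [KTanisaki, Ideal.span_le]
    rintro g ⟨s, hs1, hsn, T, hT, d, hd, rfl⟩
    subst hT
    rw [SetLike.mem_coe, Ideal.mem_comap]
    show MvPolynomial.aeval (fun j : Fin n => (X j + 1 : MvPolynomial (Fin n) ℤ))
      (hpoly n T (pdual n l lam T.card) d) ∈ Tanisaki n l lam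
    set q := pdual n l lam T.card with hqdef
    by_cases hq0 : q = 0
    · rw [hpoly, if_pos hq0, esymmOn_eq_zero T (by omega), map_zero]
      exact zero_mem _
    · rw [formulaF T q d (by omega) hd]
      refine sum_mem fun m hm => ?_
      rw [Finset.mem_Icc] at hm
      exact Ideal.mul_mem_left _ _ (Ideal.subset_span
        ⟨T.card, hs1, hsn, T, rfl, m, hm.1, rfl⟩)
  exact hle hp

private lemma esymm_mem_map {n l : ℕ} (lam : ℕ → ℕ) (T : Finset (Fin n))
    (hs1 : 1 ≤ T.card) (hsn : T.card ≤ n) :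
    ∀ d, T.card + 1 - pdual n l lam T.card ≤ d →
      esymmOn n T d ∈ Ideal.map
        (MvPolynomial.aeval (fun j : Fin n => (X j + 1 : MvPolynomial (Fin n) ℤ))).toRingHom
        (KTanisaki n l lam) := by
  intro d
  induction d using Nat.strong_induction_on with
  | _ d ih =>
    intro hd
    set q := pdual n l lam T.card with hqdef
    by_cases hq0 : q = 0
    · rw [esymmOn_eq_zero T (by omega)]
      exact zero_mem _
    · have hq1 : 1 ≤ q := by omega
      have hmemd : hpoly n T q d ∈ KTanisaki n l lam :=
        Ideal.subset_span ⟨T.card, hs1, hsn, T, rfl, d, hd, rfl⟩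
      have h1 := Ideal.mem_map_of_mem
        (MvPolynomial.aeval (fun j : Fin n => (X j + 1 : MvPolynomial (Fin n) ℤ))).toRingHom hmemd
      have h1' : MvPolynomial.aeval (fun j : Fin n => (X j + 1 : MvPolynomial (Fin n) ℤ))
          (hpoly n T q d) ∈ Ideal.map
            (MvPolynomial.aeval (fun j : Fin n => (X j + 1 : MvPolynomial (Fin n) ℤ))).toRingHom
            (KTanisaki n l lam) := h1
      rw [formulaF T q d hq1 hd] at h1'
      have hdmem : d ∈ Finset.Icc (T.card + 1 - q) d := Finset.mem_Icc.2 ⟨hd, le_rfl⟩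
      rw [← Finset.add_sum_erase _ _ hdmem, Nat.sub_self, pow_zero, Nat.choose_zero_right,
        Nat.cast_one, mul_one, map_one, one_mul] at h1'
      have h2 : (∑ m ∈ (Finset.Icc (T.card + 1 - q) d).erase d,
          MvPolynomial.C ((-1 : ℤ)^(d - m) * ((d + q - T.card - 1).choose (d - m) : ℤ))
            * esymmOn n T m) ∈ Ideal.map
            (MvPolynomial.aeval (fun j : Fin n => (X j + 1 : MvPolynomial (Fin n) ℤ))).toRingHom
            (KTanisaki n l lam) := by
        refine sum_mem fun m hm => ?_
        rw [Finset.mem_erase, Finset.mem_Icc] at hm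
        exact Ideal.mul_mem_left _ _ (ih m (by omega) (by omega))
      have h3 := sub_mem h1' h2
      rwa [add_sub_cancel_right] at h3

end Aux

/-- Let α : R → S be the ring isomorphism determined by α(u_j) = y_j + 1.
Then for every k ≥ 0, α(R^k) = S^k, and α(𝓘_λ ∩ R^k) + S^{k−1} = (I_λ ∩ S^k) + S^{k−1}
as additive subgroups of S. -/
theorem ringEquiv_maps_filtration_and_ideals
    (n l : ℕ) (lam : ℕ → ℕ) (hn : 1 ≤ n)
    (hmono : ∀ i j : ℕ, i ≤ j → lam j ≤ lam i)
    (hpos : ∀ i < l, 0 < lam i) (hzero : ∀ i, l ≤ i → lam i = 0)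
    (hsum : ∑ i ∈ Finset.range l, lam i = n)
    (α : MvPolynomial (Fin n) ℤ ≃+* MvPolynomial (Fin n) ℤ)
    (hα : ∀ j : Fin n, α (MvPolynomial.X j) = MvPolynomial.X j + 1) :
    ∀ k : ℕ,
      (RkGrp n k).map α.toAddMonoidHom = SkLeGrp n k ∧
      (((KTanisaki n l lam).toAddSubgroup ⊓ RkGrp n k).map α.toAddMonoidHom ⊔ SkLeGrp n (k - 1))
        = (((Tanisaki n l lam).toAddSubgroup ⊓ SkLeGrp n k) ⊔ SkLeGrp n (k - 1)) := by
  have alpha_eq : ∀ p, α p =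
      MvPolynomial.aeval (fun j : Fin n => (X j + 1 : MvPolynomial (Fin n) ℤ)) p := by
    intro p
    have h := MvPolynomial.eval₂Hom_X (Int.castRingHom (MvPolynomial (Fin n) ℤ))
      (α : MvPolynomial (Fin n) ℤ →+* MvPolynomial (Fin n) ℤ) p
    have hfun : (fun j : Fin n => (X j + 1 : MvPolynomial (Fin n) ℤ))
        = (⇑(α : MvPolynomial (Fin n) ℤ →+* MvPolynomial (Fin n) ℤ) ∘ X) :=
      funext fun j => (hα j).symm
    rw [MvPolynomial.aeval_def, show algebraMap ℤ (MvPolynomial (Fin n) ℤ) = Int.castRingHom _ from RingHom.ext_int _ _, hfun, h]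
    rfl
  have hsymmX : ∀ j : Fin n, α.symm (X j) = X j + MvPolynomial.C (-1) := by
    intro j
    have h1 : α (X j + MvPolynomial.C (-1)) = X j := by
      have hC : (MvPolynomial.C (-1 : ℤ) : MvPolynomial (Fin n) ℤ) = -1 := by
        rw [map_neg, map_one]
      rw [map_add, hα, hC, map_neg, map_one]
      ring
    have h2 := congrArg α.symm h1
    rw [RingEquiv.symm_apply_apply] at h2
    exact h2.symm
  have symm_eq : ∀ p, α.symm p =
      MvPolynomial.aeval (fun j : Fin n => (X j + MvPolynomial.C (-1) : MvPolynomial (Fin n) ℤ)) p := by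
    intro p
    have h := MvPolynomial.eval₂Hom_X (Int.castRingHom (MvPolynomial (Fin n) ℤ))
      (α.symm : MvPolynomial (Fin n) ℤ →+* MvPolynomial (Fin n) ℤ) p
    have hfun : (fun j : Fin n => (X j + MvPolynomial.C (-1) : MvPolynomial (Fin n) ℤ))
        = (⇑(α.symm : MvPolynomial (Fin n) ℤ →+* MvPolynomial (Fin n) ℤ) ∘ X) :=
      funext fun j => (hsymmX j).symm
    rw [MvPolynomial.aeval_def, show algebraMap ℤ (MvPolynomial (Fin n) ℤ) = Int.castRingHom _ from RingHom.ext_int _ _, hfun, h]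
    rfl
  have hdeg : ∀ p : MvPolynomial (Fin n) ℤ, (α p).totalDegree = p.totalDegree := by
    intro p
    apply le_antisymm
    · rw [alpha_eq]
      apply totalDegree_aeval_le'
      intro j
      refine le_trans (MvPolynomial.totalDegree_add _ _) (max_le ?_ ?_)
      · rw [MvPolynomial.totalDegree_X]
      · rw [MvPolynomial.totalDegree_one]; omega
    · conv_lhs => rw [← α.symm_apply_apply p]
      rw [symm_eq]
      apply totalDegree_aeval_le'
      intro j
      refine le_trans (MvPolynomial.totalDegree_add _ _) (max_le ?_ ?_)
      · rw [MvPolynomial.totalDegree_X]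
      · rw [MvPolynomial.totalDegree_C]; omega
  have hconst : ∀ p : MvPolynomial (Fin n) ℤ,
      MvPolynomial.constantCoeff (α p) = MvPolynomial.eval (fun _ => (1:ℤ)) p := by
    intro p
    rw [alpha_eq]
    have hh : (MvPolynomial.constantCoeff.comp
        (MvPolynomial.aeval (fun j : Fin n => (X j + 1 : MvPolynomial (Fin n) ℤ))).toRingHom)
        = (MvPolynomial.eval (fun _ : Fin n => (1:ℤ))) := by
      apply MvPolynomial.ringHom_ext
      · intro z
        simp
      · intro j
        simp
    exact RingHom.congr_fun hh p
  have hAdd : ∀ p : MvPolynomial (Fin n) ℤ, α.toAddMonoidHom p = α p := fun _ => rfl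
  have hmemR : ∀ (k : ℕ) (p : MvPolynomial (Fin n) ℤ), p ∈ RkGrp n k ↔
      (p.totalDegree ≤ k ∧ MvPolynomial.eval (fun _ => (1:ℤ)) p = 0) := fun _ _ => Iff.rfl
  have hmemS : ∀ (k : ℕ) (p : MvPolynomial (Fin n) ℤ), p ∈ SkLeGrp n k ↔
      (p.totalDegree ≤ k ∧ MvPolynomial.constantCoeff p = 0) := fun _ _ => Iff.rfl
  have part1 : ∀ k, (RkGrp n k).map α.toAddMonoidHom = SkLeGrp n k := by
    intro k
    ext x
    rw [AddSubgroup.mem_map, hmemS]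
    constructor
    · rintro ⟨p, hp, rfl⟩
      obtain ⟨h1, h2⟩ := (hmemR k p).1 hp
      rw [hAdd, hdeg, hconst]
      exact ⟨h1, h2⟩
    · rintro ⟨h1, h2⟩
      refine ⟨α.symm x, (hmemR k _).2 ⟨?_, ?_⟩, by rw [hAdd, α.apply_symm_apply]⟩
      · rw [← hdeg (α.symm x), α.apply_symm_apply]
        exact h1
      · have h3 := hconst (α.symm x)
        rw [α.apply_symm_apply] at h3
        rw [← h3]
        exact h2
  intro k
  refine ⟨part1 k, ?_⟩
  have hring : (α : MvPolynomial (Fin n) ℤ →+* MvPolynomial (Fin n) ℤ)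
      = (MvPolynomial.aeval (fun j : Fin n => (X j + 1 : MvPolynomial (Fin n) ℤ))).toRingHom :=
    RingHom.ext alpha_eq
  have mem_iff : ∀ p, p ∈ KTanisaki n l lam ↔ α p ∈ Tanisaki n l lam := by
    intro p
    constructor
    · intro hp
      rw [alpha_eq]
      exact KT_mapsto lam p hp
    · intro hp
      have hle : Tanisaki n l lam ≤ Ideal.map
          (MvPolynomial.aeval (fun j : Fin n => (X j + 1 : MvPolynomial (Fin n) ℤ))).toRingHom
          (KTanisaki n l lam) := by
        rw [Tanisaki, Ideal.span_le]
        rintro g ⟨s, hs1, hsn, T, hT, d, hd, rfl⟩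
        subst hT
        exact esymm_mem_map lam T hs1 hsn d hd
      have h2 := hle hp
      rw [← hring] at h2
      obtain ⟨x, hx, hxp⟩ := (Ideal.mem_map_iff_of_surjective _ α.surjective).1 h2
      have hxq : x = p := α.injective hxp
      rwa [← hxq]
  have hmap2 : ((KTanisaki n l lam).toAddSubgroup ⊓ RkGrp n k).map α.toAddMonoidHom
      = (Tanisaki n l lam).toAddSubgroup ⊓ SkLeGrp n k := by
    ext x
    rw [AddSubgroup.mem_map]
    constructor
    · rintro ⟨p, hp, rfl⟩
      rw [AddSubgroup.mem_inf] at hp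
      obtain ⟨hpK, hpR⟩ := hp
      obtain ⟨h1, h2⟩ := (hmemR k p).1 hpR
      rw [AddSubgroup.mem_inf, Submodule.mem_toAddSubgroup, hAdd]
      refine ⟨(mem_iff p).1 ((Submodule.mem_toAddSubgroup _).1 hpK), (hmemS k _).2 ⟨?_, ?_⟩⟩
      · rw [hdeg]
        exact h1
      · rw [hconst]
        exact h2
    · intro hx
      rw [AddSubgroup.mem_inf, Submodule.mem_toAddSubgroup] at hx
      obtain ⟨hxT, hxS⟩ := hx
      obtain ⟨h1, h2⟩ := (hmemS k x).1 hxS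
      refine ⟨α.symm x, ?_, by rw [hAdd, α.apply_symm_apply]⟩
      rw [AddSubgroup.mem_inf, Submodule.mem_toAddSubgroup]
      refine ⟨?_, (hmemR k _).2 ⟨?_, ?_⟩⟩
      · rw [mem_iff, α.apply_symm_apply]
        exact hxT
      · rw [← hdeg (α.symm x), α.apply_symm_apply]
        exact h1
      · have h3 := hconst (α.symm x)
        rw [α.apply_symm_apply] at h3
        rw [← h3]
        exact h2
  rw [hmap2]
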